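/- Let p be an odd prime, c, r ∈ ℤ_p, and h: ℤ_p → ℤ_p a compatible function, and define f: ℤ_p → ℤ_p by f(x) = c + r·x + p·(h(x+1) − h(x)). If c ≢ 0 (mod p) and r ≡ 1 (mod p), then f is ergodic with respect to μ_p. -/

import Mathlib

open MeasureTheory Function

variable {p : ℕ} [hp : Fact p.Prime]

noncomputable instance : MeasurableSpace ℤ_[p] := borel _
instance : BorelSpace ℤ_[p] := ⟨rfl⟩

/-- The Haar measure on `ℤ_[p]`, normalized so that `μp p ℤ_[p] = 1`. -/
noncomputable def μp (p : ℕ) [Fact p.Prime] : Measure ℤ_[p] :=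
  Measure.addHaarMeasure ⊤

/-- A function `f : ℤ_[p] → ℤ_[p]` is compatible if it is 1-Lipschitz w.r.t. `|·|_p`. -/
def Compatible (f : ℤ_[p] → ℤ_[p]) : Prop :=
  ∀ x y : ℤ_[p], ‖f x - f y‖ ≤ ‖x - y‖

/-- The `k`-th base-`p` digit of `x ∈ ℤ_[p]`, as a natural number in `{0,…,p-1}`. -/
noncomputable def digitN (x : ℤ_[p]) (k : ℕ) : ℕ := x.appr (k + 1) / p ^ k

/-- The `k`-th base-`p` digit of `x ∈ ℤ_[p]`, as an element of `ZMod p`. -/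
noncomputable def digit (x : ℤ_[p]) (k : ℕ) : ZMod p := (digitN x k : ZMod p)

/-- `f` has coordinate representation given by the family `φ`: the `k`-th digit of `f x`
is `φ k xb x_k`, where `xb = x mod p^k ∈ {0,…,p^k−1}` encodes the digits `(x_0,…,x_{k-1})`
and `x_k` is the `k`-th digit of `x`. -/
def CoordRep (f : ℤ_[p] → ℤ_[p]) (φ : ℕ → ℕ → ZMod p → ZMod p) : Prop :=
  ∀ (x : ℤ_[p]) (k : ℕ), digit (f x) k = φ k (x.appr k) (digit x k)

/-- The reduction of `f` modulo `p^k`, acting on natural-number residues `{0,…,p^k−1}`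
(for `k = k'+1` this is the map `f_{k'}` on `ℤ/p^k ℤ`). -/
noncomputable def red (f : ℤ_[p] → ℤ_[p]) (k : ℕ) (m : ℕ) : ℕ := (f (m : ℤ_[p])).appr k

/-- A map of `ZMod n` is transitive (a single-cycle permutation) iff every point can be
reached from every point by iteration. -/
def IsTransitive {n : ℕ} (g : ZMod n → ZMod n) : Prop :=
  ∀ a b : ZMod n, ∃ s : ℕ, g^[s] a = b

/-- A self-map of the residues `{0,…,N−1}` is transitive (single cycle). -/
def TransitiveOn (g : ℕ → ℕ) (N : ℕ) : Prop :=
  ∀ a, a < N → ∀ b, b < N → ∃ s : ℕ, g^[s] a = b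

/-- `compSeq ψ g xb n = ψ (g^[n-1] xb) ∘ ⋯ ∘ ψ (g xb) ∘ ψ xb`. -/
def compSeq (ψ : ℕ → ZMod p → ZMod p) (g : ℕ → ℕ) (xb : ℕ) : ℕ → ZMod p → ZMod p
  | 0 => id
  | n + 1 => ψ (g^[n] xb) ∘ compSeq ψ g xb n

/-- The permutation `F_{k,xb} = φ_{k,f_{k-1}^{(p^k-1)}(xb)} ∘ ⋯ ∘ φ_{k,xb}` of `ZMod p`. -/
noncomputable def Fperm (φ : ℕ → ℕ → ZMod p → ZMod p) (f : ℤ_[p] → ℤ_[p]) (k xb : ℕ) :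
    ZMod p → ZMod p :=
  compSeq (φ k) (red f k) xb (p ^ k)

section Aux
open Finset
open scoped ENNReal
variable {p : ℕ} [hp : Fact p.Prime]

lemma toZModPow_eq_iff (k : ℕ) (x y : ℤ_[p]) :
    PadicInt.toZModPow k x = PadicInt.toZModPow k y ↔ (p : ℤ_[p])^k ∣ x - y := by
  rw [← sub_eq_zero, ← map_sub, ← RingHom.mem_ker, PadicInt.ker_toZModPow,
    Ideal.mem_span_singleton]

noncomputable def Fmap (c : ℤ_[p]) (G : ℤ_[p] → ℤ_[p]) : ℤ_[p] → ℤ_[p] :=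
  fun y => c + y + (p : ℤ_[p]) * G y

noncomputable def Ftil (c : ℤ_[p]) (G : ℤ_[p] → ℤ_[p]) (k : ℕ) :
    ZMod (p^k) → ZMod (p^k) :=
  fun a => PadicInt.toZModPow k (Fmap c G ((a.val : ℤ_[p])))

section Core
variable (c : ℤ_[p]) (G : ℤ_[p] → ℤ_[p])
variable (hGlip : ∀ (k : ℕ) (x y : ℤ_[p]), (p : ℤ_[p])^k ∣ x - y → (p : ℤ_[p])^k ∣ G x - G y)

include hGlip

lemma Fmap_lip (k : ℕ) (x y : ℤ_[p]) (hxy : (p : ℤ_[p])^k ∣ x - y) :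
    (p : ℤ_[p])^k ∣ Fmap c G x - Fmap c G y := by
  have h2 := hGlip k x y hxy
  have : Fmap c G x - Fmap c G y = (x - y) + (p : ℤ_[p]) * (G x - G y) := by
    simp only [Fmap]; ring
  rw [this]
  exact dvd_add hxy (Dvd.dvd.mul_left h2 _)

lemma Fmap_rev (k : ℕ) (x y : ℤ_[p]) (hxy : (p : ℤ_[p])^k ∣ Fmap c G x - Fmap c G y) :
    (p : ℤ_[p])^k ∣ x - y := by
  induction k with
  | zero => simpa using one_dvd _
  | succ k ih =>
    have hk : (p : ℤ_[p])^k ∣ x - y := ih (dvd_trans (pow_dvd_pow _ (Nat.le_succ k)) hxy)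
    have h1 : (p : ℤ_[p])^(k+1) ∣ (p : ℤ_[p]) * (G x - G y) := by
      rw [pow_succ, mul_comm]
      exact mul_dvd_mul_left _ (hGlip k x y hk)
    have : x - y = (Fmap c G x - Fmap c G y) - (p : ℤ_[p]) * (G x - G y) := by
      simp only [Fmap]; ring
    rw [this]
    exact dvd_sub hxy h1

lemma Ftil_semiconj (k : ℕ) (x : ℤ_[p]) :
    Ftil c G k (PadicInt.toZModPow k x) = PadicInt.toZModPow k (Fmap c G x) := by
  haveI : NeZero (p^k) := ⟨pow_ne_zero k hp.out.ne_zero⟩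
  rw [Ftil]
  apply (toZModPow_eq_iff k _ _).2
  apply Fmap_lip c G hGlip
  rw [← toZModPow_eq_iff]
  have : ((PadicInt.toZModPow k x).val : ZMod (p^k)) = PadicInt.toZModPow k x :=
    ZMod.natCast_zmod_val _
  rw [map_natCast]; exact this

lemma Ftil_iter (k n : ℕ) (x : ℤ_[p]) :
    (Ftil c G k)^[n] (PadicInt.toZModPow k x) = PadicInt.toZModPow k ((Fmap c G)^[n] x) := by
  induction n with
  | zero => rfl
  | succ n ih =>
    rw [Function.iterate_succ_apply', Function.iterate_succ_apply', ih,
      Ftil_semiconj c G hGlip]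

lemma Ftil_inj (k : ℕ) : Function.Injective (Ftil c G k) := by
  intro a b hab
  haveI : NeZero (p^k) := ⟨pow_ne_zero k hp.out.ne_zero⟩
  have ha : (p : ℤ_[p])^k ∣ Fmap c G (a.val : ℤ_[p]) - Fmap c G (b.val : ℤ_[p]) := by
    rw [← toZModPow_eq_iff]; exact hab
  have := Fmap_rev c G hGlip k _ _ ha
  rw [← toZModPow_eq_iff] at this
  rw [map_natCast, map_natCast] at this
  rwa [ZMod.natCast_zmod_val, ZMod.natCast_zmod_val] at this

lemma Ftil_bij (k : ℕ) : Function.Bijective (Ftil c G k) := by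
  haveI : NeZero (p^k) := ⟨pow_ne_zero k hp.out.ne_zero⟩
  exact Finite.injective_iff_bijective.mp (Ftil_inj c G hGlip k)

end Core

lemma iterate_fixed_mul {α : Type*} (f : α → α) (z : α) (m : ℕ) (hm : f^[m] z = z) (t : ℕ) :
    f^[m * t] z = z := by
  rw [Function.iterate_mul]
  exact Function.iterate_fixed hm t

lemma returns_gcd {α : Type*} (f : α → α) (z : α) (m n : ℕ) (hm : f^[m] z = z)
    (hn : f^[n] z = z) : f^[Nat.gcd m n] z = z := by
  induction m using Nat.strong_induction_on generalizing n with
  | _ m ih =>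
    rcases Nat.eq_zero_or_pos m with rfl | hmpos
    · simpa using hn
    · rw [Nat.gcd_rec]
      have hn' : n = n % m + m * (n / m) := (Nat.mod_add_div n m).symm
      rw [hn', Function.iterate_add_apply, iterate_fixed_mul f z m hm (n / m)] at hn
      exact ih (n % m) (Nat.mod_lt _ hmpos) m hn hm

def TransAt (c : ℤ_[p]) (G : ℤ_[p] → ℤ_[p]) (k : ℕ) : Prop :=
  ∀ a : ZMod (p^k), ∃ j, j < p^k ∧ (Ftil c G k)^[j] 0 = a

section Orbit
variable (c : ℤ_[p]) (G : ℤ_[p] → ℤ_[p])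
variable (hGlip : ∀ (k : ℕ) (x y : ℤ_[p]), (p : ℤ_[p])^k ∣ x - y → (p : ℤ_[p])^k ∣ G x - G y)

lemma ppow_pos (k : ℕ) : 0 < p^k := pow_pos hp.out.pos k

lemma orbit0_bij (k : ℕ) (hT : TransAt c G k) :
    Function.Bijective (fun i : Fin (p^k) => (Ftil c G k)^[i.val] 0) := by
  haveI : NeZero (p^k) := ⟨pow_ne_zero k hp.out.ne_zero⟩
  rw [Fintype.bijective_iff_surjective_and_card]
  constructor
  · intro a
    obtain ⟨j, hj, hja⟩ := hT a
    exact ⟨⟨j, hj⟩, hja⟩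
  · simp [ZMod.card]

include hGlip in
lemma per0 (k : ℕ) (hT : TransAt c G k) : (Ftil c G k)^[p^k] 0 = 0 := by
  obtain ⟨j, hj, hje⟩ := hT ((Ftil c G k)^[p^k] 0)
  rcases Nat.eq_zero_or_pos j with rfl | hjpos
  · exact hje.symm
  · exfalso
    have h1 : (Ftil c G k)^[j] ((Ftil c G k)^[p^k - j] 0) = (Ftil c G k)^[j] 0 := by
      rw [← Function.iterate_add_apply, (by omega : j + (p^k - j) = p^k), hje]
    have h2 : (Ftil c G k)^[p^k - j] 0 = 0 :=
      ((Ftil_bij c G hGlip k).injective.iterate j) h1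
    have h3 := (orbit0_bij c G k hT).injective
      (a₁ := ⟨p^k - j, by omega⟩) (a₂ := ⟨0, ppow_pos k⟩)
    simp only [Fin.mk.injEq] at h3
    have := h3 (by simpa using h2)
    omega

include hGlip in
lemma perAll (k : ℕ) (hT : TransAt c G k) (b : ZMod (p^k)) :
    (Ftil c G k)^[p^k] b = b := by
  obtain ⟨j, hj, hje⟩ := hT b
  rw [← hje, ← Function.iterate_add_apply, Nat.add_comm, Function.iterate_add_apply,
    per0 c G hGlip k hT]

include hGlip in
lemma iter_mod (k : ℕ) (hT : TransAt c G k) (n : ℕ) (b : ZMod (p^k)) :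
    (Ftil c G k)^[n] b = (Ftil c G k)^[n % p^k] b := by
  conv_lhs => rw [← Nat.mod_add_div n (p^k)]
  rw [Function.iterate_add_apply, iterate_fixed_mul _ b (p^k) (perAll c G hGlip k hT b)]

include hGlip in
lemma orbitAll (k : ℕ) (hT : TransAt c G k) (b a : ZMod (p^k)) :
    ∃ j, j < p^k ∧ (Ftil c G k)^[j] b = a := by
  obtain ⟨j0, hj0, he0⟩ := hT b
  obtain ⟨j1, hj1, he1⟩ := hT a
  refine ⟨(j1 + p^k - j0) % p^k, Nat.mod_lt _ (ppow_pos k), ?_⟩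
  rw [← iter_mod c G hGlip k hT, ← he0, ← Function.iterate_add_apply,
    (by omega : j1 + p ^ k - j0 + j0 = j1 + p^k), Function.iterate_add_apply,
    per0 c G hGlip k hT, he1]

end Orbit

section KeySec
variable (c : ℤ_[p]) (G : ℤ_[p] → ℤ_[p])
variable (hGlip : ∀ (k : ℕ) (x y : ℤ_[p]), (p : ℤ_[p])^k ∣ x - y → (p : ℤ_[p])^k ∣ G x - G y)
variable (hGsum : ∀ k : ℕ, (p : ℤ_[p])^k ∣ ∑ a ∈ range (p^k), G (a : ℤ_[p]))

include hGlip in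
lemma orbit_sum (k : ℕ) (hT : TransAt c G k) (x : ℤ_[p]) :
    (p : ℤ_[p])^k ∣ ∑ i ∈ range (p^k), G ((Fmap c G)^[i] x)
      - ∑ a ∈ range (p^k), G ((a : ℕ) : ℤ_[p]) := by
  haveI : NeZero (p^k) := ⟨pow_ne_zero k hp.out.ne_zero⟩
  -- orbit of π x is a bijection Fin (p^k) ≃ ZMod (p^k)
  have hbij : Function.Bijective
      (fun i : Fin (p^k) => (Ftil c G k)^[i.val] (PadicInt.toZModPow k x)) := by
    rw [Fintype.bijective_iff_surjective_and_card]
    refine ⟨fun a => ?_, by simp [ZMod.card]⟩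
    obtain ⟨j, hj, hja⟩ := orbitAll c G hGlip k hT (PadicInt.toZModPow k x) a
    exact ⟨⟨j, hj⟩, hja⟩
  -- step 1: replace orbit points by their canonical representatives
  have h1 : (p : ℤ_[p])^k ∣ ∑ i ∈ range (p^k), G ((Fmap c G)^[i] x)
      - ∑ i ∈ range (p^k), G ((((Ftil c G k)^[i] (PadicInt.toZModPow k x)).val : ℕ) : ℤ_[p]) := by
    rw [← Finset.sum_sub_distrib]
    apply Finset.dvd_sum
    intro i _
    apply hGlip
    rw [← toZModPow_eq_iff, map_natCast, ZMod.natCast_zmod_val,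
      ← Ftil_iter c G hGlip k i x]
  -- step 2: reindex by the bijection
  have h2 : ∑ i ∈ range (p^k), G ((((Ftil c G k)^[i] (PadicInt.toZModPow k x)).val : ℕ) : ℤ_[p])
      = ∑ a ∈ range (p^k), G ((a : ℕ) : ℤ_[p]) := by
    rw [← Fin.sum_univ_eq_sum_range
      (fun i => G ((((Ftil c G k)^[i] (PadicInt.toZModPow k x)).val : ℕ) : ℤ_[p])),
      ← Fin.sum_univ_eq_sum_range (fun a => G ((a : ℕ) : ℤ_[p]))]
    have hbij2 : Function.Bijective (fun i : Fin (p^k) => ((i.val : ℕ) : ZMod (p^k))) := by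
      rw [Fintype.bijective_iff_injective_and_card]
      refine ⟨fun i j hij => ?_, by simp [ZMod.card]⟩
      have := congrArg ZMod.val hij
      rwa [ZMod.val_natCast_of_lt i.2, ZMod.val_natCast_of_lt j.2, ← Fin.ext_iff] at this
    calc ∑ i : Fin (p^k), G ((((Ftil c G k)^[i.val] (PadicInt.toZModPow k x)).val : ℕ) : ℤ_[p])
        = ∑ a : ZMod (p^k), G (((a.val : ℕ)) : ℤ_[p]) :=
          hbij.sum_comp (fun a => G (((a.val : ℕ)) : ℤ_[p]))
      _ = ∑ i : Fin (p^k), G ((((((i.val : ℕ)) : ZMod (p^k)).val : ℕ)) : ℤ_[p]) :=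
          (hbij2.sum_comp (fun a => G (((a.val : ℕ)) : ℤ_[p]))).symm
      _ = ∑ i : Fin (p^k), G ((i.val : ℕ) : ℤ_[p]) := by
          apply Finset.sum_congr rfl
          intro i _
          rw [ZMod.val_natCast_of_lt i.2]
  rw [← h2]
  exact h1

lemma iter_formula (n : ℕ) (x : ℤ_[p]) :
    (Fmap c G)^[n] x = x + n * c + (p : ℤ_[p]) * ∑ i ∈ range n, G ((Fmap c G)^[i] x) := by
  induction n with
  | zero => simp
  | succ n ih =>
    rw [Function.iterate_succ_apply', ih, Finset.sum_range_succ, ih]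
    show c + _ + _ = _
    push_cast
    ring

include hGlip hGsum in
lemma key_lemma (k : ℕ) (hT : TransAt c G k) (x : ℤ_[p]) :
    (p : ℤ_[p])^(k+1) ∣ (Fmap c G)^[p^k] x - x - c * (p : ℤ_[p])^k := by
  have hiter := iter_formula c G (p^k) x
  have hcast : ((p^k : ℕ) : ℤ_[p]) = (p : ℤ_[p])^k := by push_cast; ring
  have : (Fmap c G)^[p^k] x - x - c * (p : ℤ_[p])^k
      = (p : ℤ_[p]) * (∑ i ∈ range (p^k), G ((Fmap c G)^[i] x)
          - ∑ a ∈ range (p^k), G ((a : ℕ) : ℤ_[p]))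
        + (p : ℤ_[p]) * ∑ a ∈ range (p^k), G ((a : ℕ) : ℤ_[p]) := by
    rw [show (Fmap c G) = (fun y => c + y + (p : ℤ_[p]) * G y) from rfl] at hiter ⊢
    rw [hiter, hcast]; ring
  rw [this, pow_succ, mul_comm ((p : ℤ_[p])^k) (p : ℤ_[p])]
  exact dvd_add (mul_dvd_mul_left _ (orbit_sum c G hGlip k hT x))
    (mul_dvd_mul_left _ (hGsum k))
end KeySec

section Induct
variable (c : ℤ_[p]) (G : ℤ_[p] → ℤ_[p])
variable (hGlip : ∀ (k : ℕ) (x y : ℤ_[p]), (p : ℤ_[p])^k ∣ x - y → (p : ℤ_[p])^k ∣ G x - G y)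
variable (hGsum : ∀ k : ℕ, (p : ℤ_[p])^k ∣ ∑ a ∈ range (p^k), G (a : ℤ_[p]))
variable (hc : ¬ (p : ℤ_[p]) ∣ c)

include hGlip hGsum in
lemma key_iter (k : ℕ) (hT : TransAt c G k) (m : ℕ) (x : ℤ_[p]) :
    (p : ℤ_[p])^(k+1) ∣ (Fmap c G)^[p^k * m] x - x - m * c * (p : ℤ_[p])^k := by
  induction m with
  | zero => simp
  | succ m ih =>
    have h1 := key_lemma c G hGlip hGsum k hT ((Fmap c G)^[p^k * m] x)
    have heq : (Fmap c G)^[p^k * (m+1)] x - x - (m+1 : ℕ) * c * (p : ℤ_[p])^k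
        = ((Fmap c G)^[p^k] ((Fmap c G)^[p^k * m] x) - (Fmap c G)^[p^k * m] x
            - c * (p : ℤ_[p])^k)
          + ((Fmap c G)^[p^k * m] x - x - m * c * (p : ℤ_[p])^k) := by
      rw [show p^k * (m+1) = p^k + p^k * m by ring, Function.iterate_add_apply]
      push_cast
      ring
    rw [heq]
    exact dvd_add h1 ih

include hGlip hGsum in
lemma per_next (k : ℕ) (hT : TransAt c G k) (x : ℤ_[p]) :
    (p : ℤ_[p])^(k+1) ∣ (Fmap c G)^[p^(k+1)] x - x := by
  have h1 := key_iter c G hGlip hGsum k hT p x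
  have heq : (Fmap c G)^[p^(k+1)] x - x
      = ((Fmap c G)^[p^k * p] x - x - p * c * (p : ℤ_[p])^k) + c * (p : ℤ_[p])^(k+1) := by
    have hn : p^(k+1) = p^k * p := pow_succ p k
    rw [hn]
    ring
  rw [heq]
  exact dvd_add h1 (Dvd.dvd.mul_left dvd_rfl c)

include hGlip hGsum hc in
lemma not_fix (k : ℕ) (hT : TransAt c G k) :
    ¬ (p : ℤ_[p])^(k+1) ∣ (Fmap c G)^[p^k] 0 - 0 := by
  intro hdvd
  have h1 := key_lemma c G hGlip hGsum k hT 0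
  have h2 : (p : ℤ_[p])^(k+1) ∣ c * (p : ℤ_[p])^k := by
    have : c * (p : ℤ_[p])^k = ((Fmap c G)^[p^k] 0 - 0)
        - ((Fmap c G)^[p^k] 0 - 0 - c * (p : ℤ_[p])^k) := by ring
    rw [this]
    exact dvd_sub hdvd h1
  apply hc
  obtain ⟨t, ht⟩ := h2
  have hpk : ((p : ℤ_[p])^k) ≠ 0 :=
    pow_ne_zero k (Nat.cast_ne_zero.2 hp.out.ne_zero)
  refine ⟨t, mul_left_cancel₀ hpk ?_⟩
  rw [mul_comm ((p:ℤ_[p])^k) c, ht, pow_succ]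
  ring

include hGlip hGsum hc in
lemma trans_succ (k : ℕ) (hT : TransAt c G k) : TransAt c G (k+1) := by
  haveI : NeZero (p^(k+1)) := ⟨pow_ne_zero (k+1) hp.out.ne_zero⟩
  -- the orbit map at level k+1 is injective on range p^(k+1)
  have hper : (Ftil c G (k+1))^[p^(k+1)] 0 = 0 := by
    have h0 : (PadicInt.toZModPow (k+1)) ((Fmap c G)^[p^(k+1)] (0:ℤ_[p]))
        = PadicInt.toZModPow (k+1) (0:ℤ_[p]) :=
      (toZModPow_eq_iff _ _ _).2 (per_next c G hGlip hGsum k hT 0)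
    have h1 := Ftil_iter c G hGlip (k+1) (p^(k+1)) (0:ℤ_[p])
    rw [map_zero] at h0 h1
    rw [h1, h0]
  have hnotfix : (Ftil c G (k+1))^[p^k] 0 ≠ 0 := by
    intro hfix
    apply not_fix c G hGlip hGsum hc k hT
    have h1 := Ftil_iter c G hGlip (k+1) (p^k) (0:ℤ_[p])
    rw [map_zero, hfix] at h1
    exact (toZModPow_eq_iff _ _ _).1 (by rw [map_zero, ← h1])
  have hinj : Function.Injective
      (fun i : Fin (p^(k+1)) => (Ftil c G (k+1))^[i.val] 0) := by
    -- first: no nontrivial return below p^(k+1)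
    have hnoret : ∀ m, 0 < m → m < p^(k+1) → (Ftil c G (k+1))^[m] 0 ≠ 0 := by
      intro m hm0 hmlt hret
      have hd : (Ftil c G (k+1))^[Nat.gcd m (p^(k+1))] 0 = 0 :=
        returns_gcd _ _ m (p^(k+1)) hret hper
      set d := Nat.gcd m (p^(k+1)) with hdd
      have hdm : d ∣ m := Nat.gcd_dvd_left _ _
      have hdp : d ∣ p^(k+1) := Nat.gcd_dvd_right _ _
      obtain ⟨i, hi, hie⟩ := (Nat.dvd_prime_pow hp.out).1 hdp
      have hik : i ≤ k := by
        rcases Nat.lt_or_ge i (k+1) with h | h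
        · omega
        · exfalso
          have : d = p^(k+1) := by
            have : i = k+1 := by omega
            rw [hie, this]
          have hdlem : d ≤ m := Nat.le_of_dvd hm0 hdm
          omega
      have hdpk : d ∣ p^k := hie ▸ pow_dvd_pow p hik
      have : (Ftil c G (k+1))^[p^k] 0 = 0 := by
        rw [← Nat.mul_div_cancel' hdpk]
        exact iterate_fixed_mul _ _ d hd _
      exact hnotfix this
    intro i j hij
    rcases Nat.lt_trichotomy i.val j.val with h | h | h
    · exfalso
      have h1 : (Ftil c G (k+1))^[i.val + (j.val - i.val)] (0 : ZMod (p^(k+1)))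
          = (Ftil c G (k+1))^[i.val] 0 := by
        rw [show i.val + (j.val - i.val) = j.val by omega]
        exact hij.symm
      rw [Function.iterate_add_apply] at h1
      have h2 : (Ftil c G (k+1))^[j.val - i.val] (0 : ZMod (p^(k+1))) = 0 :=
        ((Ftil_bij c G hGlip (k+1)).injective.iterate i.val) h1
      exact hnoret _ (by omega) (by omega) h2
    · exact Fin.ext h
    · exfalso
      have h1 : (Ftil c G (k+1))^[j.val + (i.val - j.val)] (0 : ZMod (p^(k+1)))
          = (Ftil c G (k+1))^[j.val] 0 := by
        rw [show j.val + (i.val - j.val) = i.val by omega]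
        exact hij
      rw [Function.iterate_add_apply] at h1
      have h2 : (Ftil c G (k+1))^[i.val - j.val] (0 : ZMod (p^(k+1))) = 0 :=
        ((Ftil_bij c G hGlip (k+1)).injective.iterate j.val) h1
      exact hnoret _ (by omega) (by omega) h2
  have hbij : Function.Bijective
      (fun i : Fin (p^(k+1)) => (Ftil c G (k+1))^[i.val] 0) := by
    rw [Fintype.bijective_iff_injective_and_card]
    exact ⟨hinj, by simp [ZMod.card]⟩
  intro a
  obtain ⟨i, hi⟩ := hbij.surjective a
  exact ⟨i.val, i.2, hi⟩

include hGlip hGsum hc in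
lemma trans_all (k : ℕ) : TransAt c G k := by
  induction k with
  | zero =>
    intro a
    haveI : Subsingleton (ZMod (p^0)) := by rw [pow_zero]; infer_instance
    exact ⟨0, by simpa using Nat.one_pos, Subsingleton.elim _ _⟩
  | succ k ih => exact trans_succ c G hGlip hGsum hc k ih

end Induct

section Balls
variable (c : ℤ_[p]) (G : ℤ_[p] → ℤ_[p])

lemma dvd_iff_norm_le (k : ℕ) (z : ℤ_[p]) :
    (p : ℤ_[p])^k ∣ z ↔ ‖z‖ ≤ (p : ℝ)^(-(k:ℤ)) := by
  rw [← Ideal.mem_span_singleton, ← PadicInt.norm_le_pow_iff_mem_span_pow]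

def ballSet (k : ℕ) (a : ZMod (p^k)) : Set ℤ_[p] := PadicInt.toZModPow k ⁻¹' {a}

lemma mem_ballSet {k : ℕ} {a : ZMod (p^k)} {x : ℤ_[p]} :
    x ∈ ballSet k a ↔ PadicInt.toZModPow k x = a := Iff.rfl

lemma ballSet_eq_closedBall (k : ℕ) (a : ZMod (p^k)) :
    ballSet k a = Metric.closedBall ((a.val : ℤ_[p])) ((p : ℝ)^(-(k:ℤ))) := by
  haveI : NeZero (p^k) := ⟨pow_ne_zero k hp.out.ne_zero⟩
  ext x
  rw [mem_ballSet, Metric.mem_closedBall, dist_eq_norm, ← dvd_iff_norm_le,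
    ← toZModPow_eq_iff, map_natCast, ZMod.natCast_zmod_val]

lemma ballSet_measurable (k : ℕ) (a : ZMod (p^k)) : MeasurableSet (ballSet k a) := by
  rw [ballSet_eq_closedBall]
  exact Metric.isClosed_closedBall.measurableSet

lemma ballSet_mem (k : ℕ) (x : ℤ_[p]) : x ∈ ballSet k (PadicInt.toZModPow k x) := rfl

lemma ballSet_subset {k : ℕ} {x : ℤ_[p]} :
    ballSet k (PadicInt.toZModPow k x) ⊆ Metric.closedBall x ((p : ℝ)^(-(k:ℤ))) := by
  intro y hy
  rw [mem_ballSet] at hy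
  rw [Metric.mem_closedBall, dist_eq_norm, ← dvd_iff_norm_le, ← toZModPow_eq_iff, hy]

def ballFamily : Set (Set ℤ_[p]) := {S | ∃ (k : ℕ) (a : ZMod (p^k)), S = ballSet k a}

lemma ballFamily_countable : (ballFamily (p := p)).Countable := by
  have : (ballFamily (p := p)) ⊆ ⋃ k : ℕ, Set.range (fun a : ZMod (p^k) => ballSet k a) := by
    rintro S ⟨k, a, rfl⟩
    exact Set.mem_iUnion.2 ⟨k, ⟨a, rfl⟩⟩
  refine Set.Countable.mono this (Set.countable_iUnion fun k => ?_)
  haveI : NeZero (p^k) := ⟨pow_ne_zero k hp.out.ne_zero⟩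
  exact (Set.finite_range _).countable

lemma ballSet_nested {k l : ℕ} (hkl : k ≤ l) {a : ZMod (p^k)} {b : ZMod (p^l)}
    {x : ℤ_[p]} (hxa : x ∈ ballSet k a) (hxb : x ∈ ballSet l b) :
    ballSet l b ⊆ ballSet k a := by
  intro y hy
  rw [mem_ballSet] at hxa hxb hy ⊢
  rw [← hxa]
  exact (toZModPow_eq_iff k y x).2 (dvd_trans (pow_dvd_pow _ hkl)
    ((toZModPow_eq_iff l y x).1 (by rw [hy, hxb])))

lemma ballFamily_piSystem : IsPiSystem (ballFamily (p := p)) := by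
  rintro S ⟨k, a, rfl⟩ T ⟨l, b, rfl⟩ hne
  obtain ⟨x, hxa, hxb⟩ := hne
  rcases le_total k l with hkl | hlk
  · have := ballSet_nested hkl hxa hxb
    rw [Set.inter_eq_self_of_subset_right this]
    exact ⟨l, b, rfl⟩
  · have := ballSet_nested hlk hxb hxa
    rw [Set.inter_eq_self_of_subset_left this]
    exact ⟨k, a, rfl⟩

lemma ballFamily_generates :
    (borel ℤ_[p] : MeasurableSpace ℤ_[p]) = MeasurableSpace.generateFrom (ballFamily (p := p)) := by
  apply le_antisymm
  · apply MeasurableSpace.generateFrom_le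
    intro U hU
    rw [Set.mem_setOf_eq] at hU
    have hUnion : U = ⋃₀ {S ∈ ballFamily (p := p) | S ⊆ U} := by
      apply Set.Subset.antisymm
      · intro x hx
        obtain ⟨ε, hε, hball⟩ := Metric.isOpen_iff.1 hU x hx
        obtain ⟨k, hk⟩ := PadicInt.exists_pow_neg_lt p hε
        refine Set.mem_sUnion.2 ⟨ballSet k (PadicInt.toZModPow k x),
          ⟨⟨k, _, rfl⟩, ?_⟩, ballSet_mem k x⟩
        refine Set.Subset.trans ballSet_subset (Set.Subset.trans ?_ hball)
        intro y hy
        exact Metric.mem_ball.2 (lt_of_le_of_lt (Metric.mem_closedBall.1 hy) hk)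
      · intro x hx
        obtain ⟨S, ⟨_, hSU⟩, hxS⟩ := hx
        exact hSU hxS
    rw [hUnion]
    apply MeasurableSet.sUnion (Set.Countable.mono (Set.sep_subset _ _) ballFamily_countable)
    intro S hS
    exact MeasurableSpace.measurableSet_generateFrom hS.1
  · apply MeasurableSpace.generateFrom_le
    rintro S ⟨k, a, rfl⟩
    exact ballSet_measurable k a

end Balls

section Meas

noncomputable def muZp : Measure ℤ_[p] := Measure.addHaarMeasure ⊤

lemma muZp_univ : muZp (p := p) Set.univ = 1 := by
  rw [← TopologicalSpace.PositiveCompacts.coe_top (α := ℤ_[p])]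
  exact Measure.addHaarMeasure_self

instance : (muZp (p := p)).IsAddLeftInvariant := by
  unfold muZp; infer_instance

instance : IsFiniteMeasure (muZp (p := p)) :=
  ⟨by rw [muZp_univ]; exact ENNReal.one_lt_top⟩

lemma muZp_ball_translate (k : ℕ) (a : ZMod (p^k)) :
    muZp (p := p) (ballSet k a) = muZp (p := p) (ballSet k 0) := by
  have hset : ballSet k a = (fun x => (-(a.val : ℤ_[p])) + x) ⁻¹' ballSet k 0 := by
    ext x
    simp only [Set.mem_preimage, mem_ballSet, map_add, map_neg, map_natCast]
    haveI : NeZero (p^k) := ⟨pow_ne_zero k hp.out.ne_zero⟩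
    rw [ZMod.natCast_zmod_val]
    constructor
    · intro hx; rw [hx]; ring
    · intro hx
      have : PadicInt.toZModPow k x = a + (-a + PadicInt.toZModPow k x) := by ring
      rw [this, hx, add_zero]
  rw [hset]
  exact measure_preimage_add _ _ _

lemma muZp_ball (k : ℕ) (a : ZMod (p^k)) :
    muZp (p := p) (ballSet k a) = (((p^k : ℕ) : ℝ≥0∞))⁻¹ := by
  haveI : NeZero (p^k) := ⟨pow_ne_zero k hp.out.ne_zero⟩
  have hdisj : Pairwise (Function.onFun Disjoint (fun a : ZMod (p^k) => ballSet k a)) := by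
    intro a b hab
    rw [Function.onFun, Set.disjoint_left]
    intro x hxa hxb
    rw [mem_ballSet] at hxa hxb
    exact hab (by rw [← hxa, hxb])
  have hunion : (⋃ a : ZMod (p^k), ballSet k a) = Set.univ := by
    ext x
    simp only [Set.mem_iUnion, Set.mem_univ, iff_true]
    exact ⟨_, ballSet_mem k x⟩
  have hsum : ∑' a : ZMod (p^k), muZp (p := p) (ballSet k a) = 1 := by
    rw [← measure_iUnion hdisj (fun a => ballSet_measurable k a), hunion, muZp_univ]
  rw [tsum_fintype] at hsum
  have hconst : ∀ b : ZMod (p^k), muZp (p := p) (ballSet k b) = muZp (p := p) (ballSet k 0) :=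
    fun b => muZp_ball_translate k b
  rw [Finset.sum_congr rfl (fun b _ => hconst b), Finset.sum_const, Finset.card_univ,
    ZMod.card] at hsum
  have hne : ((p^k : ℕ) : ℝ≥0∞) ≠ 0 := by
    simp [pow_ne_zero, hp.out.ne_zero]
  have htop : ((p^k : ℕ) : ℝ≥0∞) ≠ ⊤ := ENNReal.natCast_ne_top _
  rw [hconst a]
  have := congrArg (fun z => (((p^k : ℕ) : ℝ≥0∞))⁻¹ * z) hsum
  simp only [nsmul_eq_mul] at this
  rw [← mul_assoc, ENNReal.inv_mul_cancel hne htop, one_mul, mul_one] at this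
  exact this

end Meas

section MP
variable (c : ℤ_[p]) (G : ℤ_[p] → ℤ_[p])
variable (hGlip : ∀ (k : ℕ) (x y : ℤ_[p]), (p : ℤ_[p])^k ∣ x - y → (p : ℤ_[p])^k ∣ G x - G y)
variable (hGcont : Continuous G)

include hGcont in
lemma Fmap_continuous : Continuous (Fmap c G) := by
  unfold Fmap
  continuity

include hGlip in
lemma Fmap_preimage_ball (k : ℕ) (a : ZMod (p^k)) :
    (Fmap c G) ⁻¹' ballSet k (Ftil c G k a) = ballSet k a := by
  ext x
  simp only [Set.mem_preimage, mem_ballSet]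
  constructor
  · intro hx
    apply Ftil_inj c G hGlip k
    rw [← hx, Ftil_semiconj c G hGlip k x]
  · intro hx
    rw [← hx, Ftil_semiconj c G hGlip k x]

include hGlip hGcont in
lemma Fmap_measurePreserving :
    MeasurePreserving (Fmap c G) (muZp (p := p)) (muZp (p := p)) := by
  have hmeas : Measurable (Fmap c G) := (Fmap_continuous c G hGcont).measurable
  refine ⟨hmeas, ?_⟩
  haveI : IsFiniteMeasure ((muZp (p := p)).map (Fmap c G)) := by
    constructor
    rw [Measure.map_apply hmeas MeasurableSet.univ, Set.preimage_univ, muZp_univ]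
    exact ENNReal.one_lt_top
  apply ext_of_generate_finite (ballFamily (p := p)) ?_ ballFamily_piSystem
  · rintro S ⟨k, a, rfl⟩
    obtain ⟨b, rfl⟩ := (Ftil_bij c G hGlip k).surjective a
    rw [Measure.map_apply hmeas (ballSet_measurable k _),
      Fmap_preimage_ball c G hGlip k b, muZp_ball, muZp_ball]
  · rw [Measure.map_apply hmeas MeasurableSet.univ, Set.preimage_univ]
  · exact ballFamily_generates
end MP

section PE
variable (c : ℤ_[p]) (G : ℤ_[p] → ℤ_[p])
variable (hGlip : ∀ (k : ℕ) (x y : ℤ_[p]), (p : ℤ_[p])^k ∣ x - y → (p : ℤ_[p])^k ∣ G x - G y)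
variable (hGsum : ∀ k : ℕ, (p : ℤ_[p])^k ∣ ∑ a ∈ range (p^k), G (a : ℤ_[p]))
variable (hc : ¬ (p : ℤ_[p]) ∣ c)
variable (hGcont : Continuous G)

include hGlip hGcont in
lemma pe_step1 (S : Set ℤ_[p]) (hS : MeasurableSet S) (hfix : (Fmap c G) ⁻¹' S = S)
    (k : ℕ) (a : ZMod (p^k)) :
    muZp (p := p) (S ∩ ballSet k (Ftil c G k a)) = muZp (p := p) (S ∩ ballSet k a) := by
  have hpre : (Fmap c G) ⁻¹' (S ∩ ballSet k (Ftil c G k a)) = S ∩ ballSet k a := by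
    rw [Set.preimage_inter, hfix, Fmap_preimage_ball c G hGlip k a]
  have h2 := (Fmap_measurePreserving c G hGlip hGcont).measure_preimage
    ((hS.inter (ballSet_measurable k (Ftil c G k a))).nullMeasurableSet)
  exact h2.symm.trans (congrArg (muZp (p := p)) hpre)

include hGlip hGsum hc hGcont in
lemma pe_const (S : Set ℤ_[p]) (hS : MeasurableSet S) (hfix : (Fmap c G) ⁻¹' S = S)
    (k : ℕ) (a : ZMod (p^k)) :
    muZp (p := p) (S ∩ ballSet k a) = muZp (p := p) (S ∩ ballSet k 0) := by
  have step2 : ∀ (j : ℕ) (b : ZMod (p^k)),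
      muZp (p := p) (S ∩ ballSet k ((Ftil c G k)^[j] b)) = muZp (p := p) (S ∩ ballSet k b) := by
    intro j
    induction j with
    | zero => intro b; rfl
    | succ j ih =>
      intro b
      have e : (Ftil c G k)^[j+1] b = Ftil c G k ((Ftil c G k)^[j] b) :=
        Function.iterate_succ_apply' _ _ _
      exact ((congrArg (fun z => muZp (p := p) (S ∩ ballSet k z)) e).trans
        (pe_step1 c G hGlip hGcont S hS hfix k _)).trans (ih b)
  obtain ⟨j, _, hj⟩ := trans_all c G hGlip hGsum hc k a
  exact (congrArg (fun z => muZp (p := p) (S ∩ ballSet k z)) hj.symm).trans (step2 j 0)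

include hGlip hGsum hc hGcont in
lemma pe_key (S : Set ℤ_[p]) (hS : MeasurableSet S) (hfix : (Fmap c G) ⁻¹' S = S)
    (k : ℕ) (a : ZMod (p^k)) :
    muZp (p := p) (S ∩ ballSet k a) = muZp (p := p) S * (((p^k : ℕ) : ℝ≥0∞))⁻¹ := by
  haveI : NeZero (p^k) := ⟨pow_ne_zero k hp.out.ne_zero⟩
  have hdisj : Pairwise (Function.onFun Disjoint
      (fun b : ZMod (p^k) => S ∩ ballSet k b)) := by
    intro x y hxy
    rw [Function.onFun, Set.disjoint_left]
    intro z hzx hzy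
    exact hxy (by rw [← mem_ballSet.1 hzx.2, mem_ballSet.1 hzy.2])
  have hunion : (⋃ b : ZMod (p^k), S ∩ ballSet k b) = S := by
    ext x
    simp only [Set.mem_iUnion, Set.mem_inter_iff]
    exact ⟨fun ⟨b, hx, _⟩ => hx, fun hx => ⟨_, hx, ballSet_mem k x⟩⟩
  have hiu := measure_iUnion (μ := muZp (p := p)) hdisj
    (fun b => hS.inter (ballSet_measurable k b))
  have h4 : muZp (p := p) S = ∑' b : ZMod (p^k), muZp (p := p) (S ∩ ballSet k b) :=
    (congrArg (muZp (p := p)) hunion).symm.trans hiu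
  rw [tsum_fintype] at h4
  have h5 : ∀ b : ZMod (p^k), b ∈ Finset.univ → muZp (p := p) (S ∩ ballSet k b)
      = muZp (p := p) (S ∩ ballSet k 0) :=
    fun b _ => pe_const c G hGlip hGsum hc hGcont S hS hfix k b
  rw [Finset.sum_congr rfl h5, Finset.sum_const, Finset.card_univ, ZMod.card,
    nsmul_eq_mul] at h4
  have hne : ((p^k : ℕ) : ℝ≥0∞) ≠ 0 := by simp [pow_ne_zero, hp.out.ne_zero]
  have htop : ((p^k : ℕ) : ℝ≥0∞) ≠ ⊤ := ENNReal.natCast_ne_top _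
  have h6 : muZp (p := p) (S ∩ ballSet k a) = muZp (p := p) (S ∩ ballSet k 0) :=
    pe_const c G hGlip hGsum hc hGcont S hS hfix k a
  rw [h6, h4, mul_comm (((p^k : ℕ) : ℝ≥0∞)) _, mul_assoc,
    ENNReal.mul_inv_cancel hne htop, mul_one]

include hGlip hGsum hc hGcont in
lemma Fmap_preErgodic : PreErgodic (Fmap c G) (muZp (p := p)) := by
  constructor
  intro S hS hfix
  have hrestrict : (muZp (p := p)).restrict S = (muZp (p := p) S) • (muZp (p := p)) := by
    apply ext_of_generate_finite (ballFamily (p := p)) ballFamily_generates ballFamily_piSystem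
    · rintro T ⟨k, a, rfl⟩
      rw [Measure.restrict_apply (ballSet_measurable k a), Set.inter_comm,
        pe_key c G hGlip hGsum hc hGcont S hS hfix k a,
        Measure.smul_apply, smul_eq_mul, muZp_ball]
    · rw [Measure.restrict_apply_univ, Measure.smul_apply, smul_eq_mul, muZp_univ, mul_one]
  have hSS : muZp (p := p) S = muZp (p := p) S * muZp (p := p) S := by
    have h7 := congrArg (fun ν : Measure ℤ_[p] => ν S) hrestrict
    simpa [Measure.restrict_apply hS, Set.inter_self] using h7
  rw [Filter.eventuallyConst_set]
  rcases eq_or_ne (muZp (p := p) S) 0 with h0 | h0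
  · right
    rw [Filter.eventually_iff, mem_ae_iff]
    have : {x : ℤ_[p] | x ∉ S}ᶜ = S := by ext x; simp
    rw [this]
    exact h0
  · left
    have hfin : muZp (p := p) S ≠ ⊤ := by
      have h8 := measure_mono (μ := muZp (p := p)) (Set.subset_univ S)
      rw [muZp_univ] at h8
      exact (lt_of_le_of_lt h8 ENNReal.one_lt_top).ne
    have h1 : muZp (p := p) S = 1 := by
      have h9 : muZp (p := p) S * 1 = muZp (p := p) S * muZp (p := p) S := by
        rw [mul_one, ← hSS]
      exact ((ENNReal.mul_right_inj h0 hfin).1 h9).symm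
    rw [Filter.eventually_iff, mem_ae_iff]
    have h10 := measure_compl hS hfin
    rw [muZp_univ, h1] at h10
    simpa using h10
end PE

lemma lip_dvd {h : ℤ_[p] → ℤ_[p]} (hh : ∀ x y : ℤ_[p], ‖h x - h y‖ ≤ ‖x - y‖)
    (k : ℕ) (x y : ℤ_[p]) (hxy : (p : ℤ_[p])^k ∣ x - y) :
    (p : ℤ_[p])^k ∣ h x - h y := by
  rw [← Ideal.mem_span_singleton, ← PadicInt.norm_le_pow_iff_mem_span_pow] at hxy ⊢
  exact (hh x y).trans hxy

theorem main_ergodic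
    (hp2 : p ≠ 2) (c r : ℤ_[p]) (h : ℤ_[p] → ℤ_[p])
    (hh : ∀ x y : ℤ_[p], ‖h x - h y‖ ≤ ‖x - y‖)
    (hc : ¬ (p : ℤ_[p]) ∣ c) (hr : (p : ℤ_[p]) ∣ (r - 1)) :
    Ergodic (fun x => c + r * x + (p : ℤ_[p]) * (h (x + 1) - h x)) (muZp (p := p)) := by
  obtain ⟨s, hs⟩ := hr
  set G : ℤ_[p] → ℤ_[p] := fun x => s * x + (h (x + 1) - h x) with hG
  have hGlip : ∀ (k : ℕ) (x y : ℤ_[p]), (p : ℤ_[p])^k ∣ x - y →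
      (p : ℤ_[p])^k ∣ G x - G y := by
    intro k x y hxy
    have h1 : (p : ℤ_[p])^k ∣ h (x+1) - h (y+1) :=
      lip_dvd hh k (x+1) (y+1) (by rw [show x + 1 - (y+1) = x - y by ring]; exact hxy)
    have h2 : (p : ℤ_[p])^k ∣ h x - h y := lip_dvd hh k x y hxy
    have : G x - G y = s * (x - y) + ((h (x+1) - h (y+1)) - (h x - h y)) := by
      rw [hG]; ring
    rw [this]
    exact dvd_add (hxy.mul_left s) (dvd_sub h1 h2)
  have hGsum : ∀ k : ℕ, (p : ℤ_[p])^k ∣ ∑ a ∈ range (p^k), G (a : ℤ_[p]) := by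
    intro k
    have hsplit : ∑ a ∈ range (p^k), G (a : ℤ_[p])
        = s * ∑ a ∈ range (p^k), ((a : ℕ) : ℤ_[p])
          + ∑ a ∈ range (p^k), (h (((a+1 : ℕ) : ℤ_[p])) - h ((a : ℕ) : ℤ_[p])) := by
      rw [Finset.mul_sum, ← Finset.sum_add_distrib]
      apply Finset.sum_congr rfl
      intro a _
      show s * (a : ℤ_[p]) + (h ((a : ℤ_[p]) + 1) - h (a : ℤ_[p])) = _
      have : ((a : ℤ_[p]) + 1) = ((a+1 : ℕ) : ℤ_[p]) := by push_cast; ring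
      rw [this]
    rw [hsplit]
    apply dvd_add
    · -- Gauss sum part
      have hnatdvd : p^k ∣ ∑ a ∈ range (p^k), a := by
        have h2 : (∑ a ∈ range (p^k), a) * 2 = p^k * (p^k - 1) :=
          Finset.sum_range_id_mul_two (p^k)
        have hco : Nat.Coprime (p^k) 2 :=
          Nat.Coprime.pow_left k (((Nat.coprime_primes hp.out Nat.prime_two).2 hp2))
        exact hco.dvd_of_dvd_mul_right (h2 ▸ Dvd.intro _ rfl)
      obtain ⟨t, ht⟩ := hnatdvd
      have : ∑ a ∈ range (p^k), ((a : ℕ) : ℤ_[p]) = (p : ℤ_[p])^k * (t : ℤ_[p]) := by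
        rw [← Nat.cast_sum, ht]
        push_cast
        ring
      rw [this]
      exact Dvd.dvd.mul_left (Dvd.intro _ rfl) s
    · rw [Finset.sum_range_sub (fun a => h ((a : ℕ) : ℤ_[p]))]
      apply lip_dvd hh
      push_cast
      simp
  have hGcont : Continuous G := by
    have hhc : Continuous h := by
      refine LipschitzWith.continuous (K := 1) ?_
      apply LipschitzWith.of_dist_le_mul
      intro x y
      rw [dist_eq_norm, dist_eq_norm]
      calc ‖h x - h y‖ ≤ ‖x - y‖ := hh x y
        _ = 1 * ‖x - y‖ := (one_mul _).symm
        _ ≤ _ := le_refl _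
    rw [hG]
    continuity
  have heq : (fun x => c + r * x + (p : ℤ_[p]) * (h (x + 1) - h x)) = Fmap c G := by
    funext x
    have hr' : r = 1 + (p : ℤ_[p]) * s := by rw [← hs]; ring
    rw [Fmap, hG, hr']
    ring
  rw [heq]
  exact ⟨Fmap_measurePreserving c G hGlip hGcont,
    Fmap_preErgodic c G hGlip hGsum hc hGcont⟩

end Aux

/-- For odd `p`, `c, r ∈ ℤ_[p]` with `c ≢ 0 (mod p)` and `r ≡ 1 (mod p)`, and compatible
`h`, the function `f(x) = c + r·x + p·(h(x+1) − h(x))` is ergodic w.r.t. `μp p`. -/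
theorem ergodic_of_affine_add_discrete_derivative
    (hp2 : p ≠ 2) (c r : ℤ_[p]) (h : ℤ_[p] → ℤ_[p]) (hh : Compatible h)
    (hc : ¬ (p : ℤ_[p]) ∣ c) (hr : (p : ℤ_[p]) ∣ (r - 1)) :
    Ergodic (fun x => c + r * x + (p : ℤ_[p]) * (h (x + 1) - h x)) (μp p) :=
  main_ergodic hp2 c r h hh hc hr
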